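/- A cycle C_n (n ≥ 3) admits a J-colouring if and only if n ≡ 0 (mod 2) or n ≡ 0 (mod 3). -/

import Mathlib

open SimpleGraph

/-- A colouring is proper. -/
def ProperColoring {V : Type*} {k : ℕ} (G : SimpleGraph V) (c : V → Fin k) : Prop :=
  ∀ u v, G.Adj u v → c u ≠ c v

/-- Vertex `v` belongs to a rainbow neighbourhood: its closed neighbourhood
contains every colour. -/
def RainbowAt {V : Type*} {k : ℕ} (G : SimpleGraph V) (c : V → Fin k) (v : V) : Prop :=
  ∀ i : Fin k, ∃ u, (u = v ∨ G.Adj v u) ∧ c u = i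

/-- A J-colouring: a proper colouring in which every vertex belongs to a
rainbow neighbourhood. -/
def IsJColoring {V : Type*} {k : ℕ} (G : SimpleGraph V) (c : V → Fin k) : Prop :=
  ProperColoring G c ∧ ∀ v, RainbowAt G c v

private lemma JC.adj_iff {m : ℕ} (u v : Fin (m+2)) :
    (cycleGraph (m+2)).Adj u v ↔ u = v + 1 ∨ v = u + 1 := by
  rw [cycleGraph_adj, sub_eq_iff_eq_add', sub_eq_iff_eq_add']

private lemma JC.val_add_one {m : ℕ} (v : Fin (m+2)) : (v+1).val = (v.val+1) % (m+2) := by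
  rw [Fin.add_def, Fin.val_one]

private lemma JC.third3 : ∀ a b : Fin 3, a ≠ b → ∃ i : Fin 3, i ≠ a ∧ i ≠ b := by decide

private lemma JC.uniq3 : ∀ a b d e : Fin 3, b ≠ a → d ≠ a → d ≠ b → e ≠ b → e ≠ d → e = a := by
  decide

theorem cycle_JColorable_iff (n : ℕ) (hn : 3 ≤ n) :
    (∃ k : ℕ, ∃ c : Fin n → Fin k, IsJColoring (cycleGraph n) c) ↔
      n % 2 = 0 ∨ n % 3 = 0 := by
  obtain ⟨m, rfl⟩ : ∃ m, n = m + 2 := ⟨n - 2, by omega⟩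
  have hadj1 : ∀ v : Fin (m+2), (cycleGraph (m+2)).Adj v (v+1) := fun v =>
    (JC.adj_iff v (v+1)).mpr (Or.inr rfl)
  constructor
  · rintro ⟨k, c, hprop, hrb⟩
    -- step: consecutive colours differ
    have hstep : ∀ v : Fin (m+2), c (v+1) ≠ c v :=
      fun v => (hprop v (v+1) (hadj1 v)).symm
    -- k ≥ 2
    have hk2 : 2 ≤ k := by
      have h01 := hstep 0
      have hv : (c 1).val ≠ (c 0).val := fun h => h01 (Fin.ext h)
      have := (c 0).isLt; have := (c 1).isLt
      omega
    -- k ≤ 3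
    have hk3 : k ≤ 3 := by
      have hsurj : Set.SurjOn c (({0, 1, -1} : Finset (Fin (m+2))) : Set (Fin (m+2)))
          ((Finset.univ : Finset (Fin k)) : Set (Fin k)) := by
        intro i _
        obtain ⟨u, hu, hcu⟩ := hrb 0 i
        refine ⟨u, ?_, hcu⟩
        simp only [Finset.coe_insert, Finset.coe_singleton, Set.mem_insert_iff,
          Set.mem_singleton_iff]
        rcases hu with rfl | hu
        · exact Or.inl rfl
        · rcases (JC.adj_iff 0 u).mp hu with h | h
          · right; right
            exact eq_neg_of_add_eq_zero_left h.symm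
          · right; left; rw [h, zero_add]
      have hcard := Finset.card_le_card_of_surjOn c hsurj
      have h3 : ({0, 1, -1} : Finset (Fin (m+2))).card ≤ 3 :=
        (Finset.card_insert_le _ _).trans (by
          have := Finset.card_insert_le (1 : Fin (m+2)) ({-1} : Finset (Fin (m+2)))
          simp only [Finset.card_singleton] at this ⊢
          omega)
      simpa using hcard.trans h3
    interval_cases k
    · -- two colours: n is even
      left
      have hne2 : ∀ v : Fin (m+2), (c (v+1)).val ≠ (c v).val :=
        fun v h => hstep v (Fin.ext h)
      open Fin.NatCast in
      have key : ∀ j : ℕ, (c ((j : Fin (m+2)))).val = ((c 0).val + j) % 2 := by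
        intro j
        induction j with
        | zero =>
          have := (c 0).isLt
          simp only [Nat.cast_zero, Nat.add_zero]
          omega
        | succ j ih =>
          have hc : ((j+1 : ℕ) : Fin (m+2)) = ((j : ℕ) : Fin (m+2)) + 1 := by push_cast; ring
          rw [hc]
          have h1 := hne2 ((j : ℕ) : Fin (m+2))
          have := (c (((j : ℕ) : Fin (m+2)) + 1)).isLt
          have := (c ((j : ℕ) : Fin (m+2))).isLt
          omega
      have hself := key (m+2)
      rw [Fin.natCast_self] at hself
      have := (c 0).isLt
      omega
    · -- three colours: n ≡ 0 mod 3
      right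
      -- every vertex: the colour two steps on is the third colour
      have hpair : ∀ v : Fin (m+2), c (v+1+1) ≠ c v ∧ c (v+1+1) ≠ c (v+1) := by
        intro v
        obtain ⟨i, hia, hib⟩ := JC.third3 (c v) (c (v+1)) (hstep v).symm
        obtain ⟨u, hu, hcu⟩ := hrb (v+1) i
        have hu' : u = v + 1 + 1 := by
          rcases hu with rfl | hu
          · exact absurd hcu.symm hib
          · rcases (JC.adj_iff (v+1) u).mp hu with h | h
            · exfalso
              have hv : v = u := add_right_cancel h
              rw [← hv] at hcu
              exact hia hcu.symm
            · exact h
        rw [hu'] at hcu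
        rw [hcu]
        exact ⟨hia, hib⟩
      have hper : ∀ v : Fin (m+2), c (v+1+1+1) = c v := by
        intro v
        obtain ⟨hd0, hd1⟩ := hpair v
        obtain ⟨he1, he2⟩ := hpair (v+1)
        exact JC.uniq3 (c v) (c (v+1)) (c (v+1+1)) (c (v+1+1+1))
          (hstep v) hd0 hd1 he1 he2
      open Fin.NatCast in
      have key : ∀ j : ℕ, c ((3*j : ℕ) : Fin (m+2)) = c 0 := by
        intro j
        induction j with
        | zero => norm_num
        | succ j ih =>
          have hc : ((3*(j+1) : ℕ) : Fin (m+2)) = ((3*j : ℕ) : Fin (m+2)) + 1 + 1 + 1 := by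
            rw [show 3*(j+1) = 3*j+1+1+1 by ring]; simp only [Nat.cast_succ]
          rw [hc, hper, ih]
      by_contra h3
      have hcop : Nat.Coprime 3 (m+2) :=
        (Nat.Prime.coprime_iff_not_dvd Nat.prime_three).mpr
          (fun hd => by obtain ⟨t, ht⟩ := hd; exact h3 (by omega))
      obtain ⟨j, -, hj⟩ := Nat.exists_mul_mod_eq_one_of_coprime hcop (by omega)
      open Fin.NatCast in
      have hcast : ((3*j : ℕ) : Fin (m+2)) = 1 :=
        Fin.ext (by rw [Fin.val_natCast, hj, Fin.val_one])
      have hc1 : c 1 = c 0 := by rw [← hcast]; exact key j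
      exact hstep 0 (by simpa using hc1)
  · rintro (h2 | h3)
    · -- even: alternate two colours
      refine ⟨2, fun v => ⟨v.val % 2, by omega⟩, ?_, ?_⟩
      · intro u v huv h
        have hne : ∀ w : Fin (m+2), ((w+1).val) % 2 ≠ w.val % 2 := by
          intro w
          rw [JC.val_add_one]
          have hw := w.isLt
          rcases Nat.lt_or_ge (w.val + 1) (m+2) with h' | h'
          · rw [Nat.mod_eq_of_lt h']; omega
          · have : w.val + 1 = m + 2 := by omega
            rw [this, Nat.mod_self]; omega
        rcases (JC.adj_iff u v).mp huv with rfl | rfl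
        · exact hne v (congrArg Fin.val h)
        · exact hne u (congrArg Fin.val h).symm
      · intro v i
        by_cases hi : i.val = v.val % 2
        · exact ⟨v, Or.inl rfl, Fin.ext hi.symm⟩
        · refine ⟨v + 1, Or.inr (hadj1 v), Fin.ext ?_⟩
          have hne : ((v+1).val) % 2 ≠ v.val % 2 := by
            rw [JC.val_add_one]
            have hw := v.isLt
            rcases Nat.lt_or_ge (v.val + 1) (m+2) with h' | h'
            · rw [Nat.mod_eq_of_lt h']; omega
            · have : v.val + 1 = m + 2 := by omega
              rw [this, Nat.mod_self]; omega
          have := i.isLt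
          show (v+1).val % 2 = i.val
          omega
    · -- 3 ∣ n: colour by residue mod 3
      have hmod : ∀ w : Fin (m+2), ((w+1).val) % 3 = (w.val + 1) % 3 := by
        intro w
        rw [JC.val_add_one]
        have hw := w.isLt
        rcases Nat.lt_or_ge (w.val + 1) (m+2) with h' | h'
        · rw [Nat.mod_eq_of_lt h']
        · have hv : w.val + 1 = m + 2 := by omega
          rw [hv, Nat.mod_self, h3]
      refine ⟨3, fun v => ⟨v.val % 3, by omega⟩, ?_, ?_⟩
      · intro u v huv h
        have h' := congrArg Fin.val h
        simp only at h'
        rcases (JC.adj_iff u v).mp huv with rfl | rfl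
        · rw [hmod v] at h'; omega
        · rw [hmod u] at h'; omega
      · intro v i
        have hadjm : (cycleGraph (m+2)).Adj v (v - 1) := by
          rw [JC.adj_iff]; left; rw [sub_add_cancel]
        have hm1 : ((v - 1) + 1) = v := sub_add_cancel v 1
        have hval : ((v-1).val + 1) % 3 = v.val % 3 := by
          have := hmod (v - 1)
          rw [hm1] at this
          omega
        have hi := i.isLt
        have h1 := hmod v
        by_cases hi0 : i.val = v.val % 3
        · exact ⟨v, Or.inl rfl, Fin.ext hi0.symm⟩
        · by_cases hi1 : i.val = (v+1).val % 3
          · exact ⟨v + 1, Or.inr (hadj1 v), Fin.ext hi1.symm⟩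
          · refine ⟨v - 1, Or.inr hadjm, Fin.ext ?_⟩
            show (v-1).val % 3 = i.val
            omega
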